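/- If L ⊆ w1*w2*⋯wn* is a VAS language over Σ for words w1,…,wn ∈ Σ*, then the set U = {(x1,…,xn) ∈ ℕ^n : w1^{x1}⋯wn^{xn} ∈ L} is a section of the reachability set of some vector addition system. -/

import Mathlib

/-- Kleene star of a language, as a set of lists. -/
def LangStar {α : Type*} (K : Set (List α)) : Set (List α) :=
  {w | ∃ ws : List (List α), (∀ u ∈ ws, u ∈ K) ∧ w = ws.flatten}

/-- Concatenation of two languages. -/
def LangConc {α : Type*} (K L : Set (List α)) : Set (List α) :=
  {w | ∃ u ∈ K, ∃ v ∈ L, w = u ++ v}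

/-- Concatenation `L 0 · L 1 ⋯ L (k-1)` of a finite family of languages. -/
def LangConcFn {α : Type*} {k : ℕ} (Ls : Fin k → Set (List α)) : Set (List α) :=
  {w | ∃ ws : Fin k → List α, (∀ j, ws j ∈ Ls j) ∧ w = (List.ofFn ws).flatten}

/-- `w ^ x` : the `x`-fold repetition of the word `w`. -/
def wpow {α : Type*} (w : List α) (x : ℕ) : List α := (List.replicate x w).flatten

/-- The set of factors `F(L) = {w : L ∩ Σ*wΣ* ≠ ∅}`. -/
def Factors {α : Type*} (L : Set (List α)) : Set (List α) :=
  {w | ∃ u ∈ L, ∃ x y : List α, u = x ++ w ++ y}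

/-- The set of factor tuples
`F_n(L) = {(w1,…,wn) : Σ*w1Σ*w2Σ*⋯wnΣ* ∩ L ≠ ∅}`. -/
def FactorTuples {α : Type*} (n : ℕ) (L : Set (List α)) : Set (Fin n → List α) :=
  {w | ∃ u ∈ L, ∃ g : Fin (n + 1) → List α,
      u = (List.ofFn fun i : Fin n => g i.castSucc ++ w i).flatten ++ g (Fin.last n)}

/-- A language is bounded if `L ⊆ w1* ⋯ wn*` for some words `w1,…,wn`. -/
def IsBoundedLang {α : Type*} (L : Set (List α)) : Prop :=
  ∃ (n : ℕ) (ws : Fin n → List α), L ⊆ LangConcFn fun i => LangStar {ws i}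

/-- A language is regular if it is accepted by a finite (deterministic) automaton. -/
def IsRegularLang {α : Type*} (L : Set (List α)) : Prop :=
  ∃ (σ : Type) (_ : Fintype σ) (M : DFA α σ), ∀ w, w ∈ M.accepts ↔ w ∈ L

/-- `FireList T v ts v'` : firing the sequence `ts` of transitions (all from `T`)
leads from configuration `v` to `v'`, keeping all intermediate configurations
nonnegative (automatic, as configurations live in `Fin d → ℕ`). -/
def FireList {d : ℕ} (T : Set (Fin d → ℤ)) :
    (Fin d → ℕ) → List (Fin d → ℤ) → (Fin d → ℕ) → Prop
  | v, [], v' => v = v'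
  | v, τ :: ts, v' => τ ∈ T ∧ ∃ u : Fin d → ℕ,
      (∀ i, (u i : ℤ) = (v i : ℤ) + τ i) ∧ FireList T u ts v'

/-- A labeled vector addition system over the alphabet `α`. -/
structure LVAS (α : Type*) where
  d : ℕ
  T : Finset (Fin d → ℤ)
  s : Fin d → ℕ
  t : Fin d → ℕ
  /-- the labeling `h : T → Σ ∪ {ε}`, with `none` playing the role of `ε` -/
  lab : (Fin d → ℤ) → Option α

/-- The language of a labeled VAS: labels of firing sequences from source to target. -/
def LVAS.lang {α : Type*} (V : LVAS α) : Set (List α) :=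
  {w | ∃ ts : List (Fin V.d → ℤ), FireList (↑V.T) V.s ts V.t ∧ ts.filterMap V.lab = w}

/-- A VAS language is the language of some labeled VAS. -/
def IsVASLang {α : Type*} (L : Set (List α)) : Prop := ∃ V : LVAS α, L = V.lang

/-- Given a decomposition `n = ns 0 + ⋯ + ns (k-1)`, the index in `Fin n` of the
`i`-th position of the `j`-th block. -/
def blockIdx {k n : ℕ} (ns : Fin k → ℕ) (h : ∑ j, ns j = n) (j : Fin k)
    (i : Fin (ns j)) : Fin n :=
  ⟨(∑ j' ∈ Finset.univ.filter (fun j' => j' < j), ns j') + (i : ℕ), by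
    have hj : j ∉ Finset.univ.filter (fun j' => j' < j) := by simp
    have h1 : ∑ j' ∈ insert j (Finset.univ.filter (fun j' => j' < j)), ns j'
        ≤ ∑ j', ns j' := Finset.sum_le_sum_of_subset (Finset.subset_univ _)
    rw [Finset.sum_insert hj] at h1
    have h2 := i.isLt
    omega⟩

/-- The product set `F_{n1}(L1) × ⋯ × F_{nk}(Lk) ⊆ (Σ*)^n` for a decomposition
`n = n1 + ⋯ + nk`: those `n`-tuples whose `j`-th block belongs to `F_{nj}(Lj)`. -/
def ProdFT {α : Type*} {k n : ℕ} (ns : Fin k → ℕ) (Ls : Fin k → Set (List α))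
    (h : ∑ j, ns j = n) : Set (Fin n → List α) :=
  {w | ∀ j : Fin k,
    (fun i : Fin (ns j) => w (blockIdx ns h j i)) ∈ FactorTuples (ns j) (Ls j)}

/-- An `n`-dimensional unboundedness predicate. -/
def IsUnbPred {α : Type*} (n : ℕ) (p : Set (Fin n → List α) → Prop) : Prop :=
  (∀ S T : Set (Fin n → List α), p S → S ⊆ T → p T) ∧
  (∀ S T : Set (Fin n → List α), p (S ∪ T) → p S ∨ p T) ∧
  (∀ (k : ℕ) (Ls : Fin k → Set (List α)), p (FactorTuples n (LangConcFn Ls)) →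
     ∃ (ns : Fin k → ℕ) (h : ∑ j, ns j = n), p (ProdFT ns Ls h))

/-- Downward closure of a set of `n`-tuples of words w.r.t. the (scattered) subword
ordering in each component. -/
def dclT {α : Type*} {n : ℕ} (S : Set (Fin n → List α)) : Set (Fin n → List α) :=
  {u | ∃ v ∈ S, ∀ i, List.Sublist (u i) (v i)}

/-- `numF K w = |w|_K`, the largest `m` such that `m` non-overlapping factors from `K`
occur in `w` in order. -/
noncomputable def numF {α : Type*} (K : Set (List α)) (w : List α) : ℕ :=
  sSup {m | ∃ ws : Fin m → List α, (∀ i, ws i ∈ K) ∧ ws ∈ FactorTuples m {w}}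

/-- `cWrap c L = cLc = {cuc : u ∈ L}`. -/
def cWrap {α : Type*} (c : α) (L : Set (List α)) : Set (List α) :=
  {w | ∃ u ∈ L, w = c :: (u ++ [c])}

/-- `cSepStar c L = c(Lc)* = {c u1 c u2 c ⋯ um c : m ≥ 0, u1,…,um ∈ L}`. -/
def cSepStar {α : Type*} (c : α) (L : Set (List α)) : Set (List α) :=
  {w | ∃ us : List (List α), (∀ u ∈ us, u ∈ L) ∧
      w = c :: (us.map (fun u => u ++ [c])).flatten}

/-- A subset of `ℕ^n` is recognizable if it is saturated by an additive monoid
morphism into a finite monoid. -/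
def IsRecognizable {n : ℕ} (U : Set (Fin n → ℕ)) : Prop :=
  ∃ (M : Type) (_ : AddMonoid M) (_ : Finite M) (φ : (Fin n → ℕ) →+ M),
    U = φ ⁻¹' (φ '' U)

/-- `U ⊆ ℕ^n` is a section of a VAS reachability set. -/
def IsVASReachSection {n : ℕ} (U : Set (Fin n → ℕ)) : Prop :=
  ∃ (N : ℕ) (T : Finset (Fin N → ℤ)) (s : Fin N → ℕ) (I : Finset (Fin N))
    (x : Fin N → ℕ) (e : Fin n → Fin N),
    StrictMono e ∧ (∀ j, e j ∉ I) ∧ (∀ i, i ∉ I → ∃ j, e j = i) ∧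
    U = {u | ∃ v : Fin N → ℕ, (∃ ts, FireList (↑T) s ts v) ∧
          (∀ i ∈ I, v i = x i) ∧ (∀ j, v (e j) = u j)}
namespace BVLS

open List

variable {α : Type*}

/-! ### basic word lemmas -/

lemma wpow_zero (w : List α) : wpow w 0 = [] := rfl

lemma wpow_succ (w : List α) (k : ℕ) : wpow w (k+1) = w ++ wpow w k := by
  simp [wpow, List.replicate_succ]

lemma wpow_succ' (w : List α) (k : ℕ) : wpow w (k+1) = wpow w k ++ w := by
  simp [wpow, List.replicate_succ']

lemma wpow_nil (k : ℕ) : wpow ([] : List α) k = [] := by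
  induction k with
  | zero => rfl
  | succ k ih => rw [wpow_succ, ih]; rfl

variable {n : ℕ} (ws : Fin n → List α)

/-- the word `w1^{c1} ⋯ wn^{cn}` -/
def word (c : Fin n → ℕ) : List α :=
  (List.ofFn fun i => wpow (ws i) (c i)).flatten

lemma flatten_ofFn_nil {m : ℕ} {f : Fin m → List α} (h : ∀ i, f i = []) :
    (List.ofFn f).flatten = [] := by
  rw [List.flatten_eq_nil_iff]
  intro l hl
  rw [List.mem_ofFn] at hl
  obtain ⟨i, rfl⟩ := hl
  exact h i

lemma word_congr {c c' : Fin n → ℕ} (h : ∀ i, (ws i).length ≠ 0 → c i = c' i) :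
    word ws c = word ws c' := by
  unfold word
  congr 1
  apply congrArg
  funext i
  by_cases hi : (ws i).length = 0
  · have : ws i = [] := List.eq_nil_of_length_eq_zero hi
    rw [this, wpow_nil, wpow_nil]
  · rw [h i hi]

lemma word_zero : word ws (fun _ => 0) = [] :=
  flatten_ofFn_nil (fun _ => rfl)

lemma flatten_ofFn_append {m : ℕ} {f g : Fin m → List α} {t : List α} (j : Fin m)
    (h1 : ∀ i, i < j → g i = f i) (h2 : g j = f j ++ t)
    (h3 : ∀ i, j < i → g i = [] ∧ f i = []) :
    (List.ofFn g).flatten = (List.ofFn f).flatten ++ t := by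
  induction m with
  | zero => exact j.elim0
  | succ m ih =>
    rw [List.ofFn_succ, List.ofFn_succ, List.flatten_cons, List.flatten_cons]
    induction j using Fin.cases with
    | zero =>
      have hg : (List.ofFn fun i : Fin m => g i.succ).flatten = [] :=
        flatten_ofFn_nil (fun i => (h3 i.succ (Fin.succ_pos i)).1)
      have hf : (List.ofFn fun i : Fin m => f i.succ).flatten = [] :=
        flatten_ofFn_nil (fun i => (h3 i.succ (Fin.succ_pos i)).2)
      rw [hg, hf, h2]
      simp
    | succ j' =>
      have h0 : g 0 = f 0 := h1 0 (Fin.succ_pos j')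
      have := ih (f := fun i => f i.succ) (g := fun i => g i.succ) j'
        (fun i hi => h1 i.succ (Fin.succ_lt_succ_iff.mpr hi)) h2
        (fun i hi => h3 i.succ (Fin.succ_lt_succ_iff.mpr hi))
      rw [h0, this, List.append_assoc]

lemma word_split (c : Fin n → ℕ) (j : Fin n) (h : ∀ i, j < i → c i = 0) :
    word ws (fun i => c i + if i = j then 1 else 0) = word ws c ++ ws j := by
  apply flatten_ofFn_append j
  · intro i hi
    show wpow (ws i) (c i + if i = j then 1 else 0) = wpow (ws i) (c i)
    rw [if_neg (Fin.ne_of_lt hi), Nat.add_zero]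
  · show wpow (ws j) (c j + if j = j then 1 else 0) = wpow (ws j) (c j) ++ ws j
    rw [if_pos rfl, wpow_succ']
  · intro i hi
    show wpow (ws i) (c i + if i = j then 1 else 0) = [] ∧ wpow (ws i) (c i) = []
    rw [if_neg (Fin.ne_of_gt hi), Nat.add_zero, h i hi]
    exact ⟨rfl, rfl⟩

/-! ### FireList lemmas -/

lemma fireList_append {d : ℕ} {T : Set (Fin d → ℤ)} {a b c : Fin d → ℕ}
    {ts us : List (Fin d → ℤ)} (h1 : FireList T a ts b) (h2 : FireList T b us c) :
    FireList T a (ts ++ us) c := by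
  induction ts generalizing a with
  | nil => cases h1; exact h2
  | cons τ ts ih =>
    obtain ⟨hτ, u, hu, hrest⟩ := h1
    exact ⟨hτ, u, hu, ih hrest⟩

/-! ### the extended VAS: states and coordinates -/

variable (V : LVAS α)

/-- reader states: position `p` inside the `j`-th block, or a final state `none`. -/
abbrev St := Option (Σ j : Fin n, Fin ((ws j).length + 1))

noncomputable def es : St ws ≃ Fin (Fintype.card (St ws)) := Fintype.equivFin _

/-- dimension of the extended VAS -/
def NN : ℕ := n + V.d + Fintype.card (St ws)

/-- build a configuration/transition of the extended VAS from its three blocks: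
counters, a configuration of `V`, and state indicators. -/
noncomputable def enc {β : Type*} (a : Fin n → β) (b : Fin V.d → β) (g : St ws → β) :
    Fin (NN ws V) → β :=
  fun k => if h : (k : ℕ) < n then a ⟨k, h⟩
    else if h2 : (k : ℕ) < n + V.d then b ⟨(k : ℕ) - n, by omega⟩
    else g ((es ws).symm ⟨(k : ℕ) - (n + V.d), by
      have := k.isLt; unfold NN at this; omega⟩)

def cC (j : Fin n) : Fin (NN ws V) := ⟨j, by have := j.isLt; unfold NN; omega⟩
def cV (i : Fin V.d) : Fin (NN ws V) := ⟨n + i, by have := i.isLt; unfold NN; omega⟩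
noncomputable def cS (q : St ws) : Fin (NN ws V) :=
  ⟨n + V.d + (es ws q), by have := (es ws q).isLt; unfold NN; omega⟩

variable {β : Type*}

@[simp] lemma enc_cC (a : Fin n → β) (b : Fin V.d → β) (g : St ws → β) (j : Fin n) :
    enc ws V a b g (cC ws V j) = a j := by
  have hj := j.isLt
  simp only [enc, cC]
  exact dif_pos hj

@[simp] lemma enc_cV (a : Fin n → β) (b : Fin V.d → β) (g : St ws → β) (i : Fin V.d) :
    enc ws V a b g (cV ws V i) = b i := by
  have hi := i.isLt
  simp only [enc, cV]
  refine (dif_neg (show ¬ (n + (i : ℕ) < n) by omega)).trans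
    ((dif_pos (show n + (i : ℕ) < n + V.d by omega)).trans ?_)
  congr 1
  exact Fin.ext (by simp)

@[simp] lemma enc_cS (a : Fin n → β) (b : Fin V.d → β) (g : St ws → β) (q : St ws) :
    enc ws V a b g (cS ws V q) = g q := by
  simp only [enc, cS]
  refine (dif_neg (show ¬ (n + V.d + (es ws q : ℕ) < n) by omega)).trans
    ((dif_neg (show ¬ (n + V.d + (es ws q : ℕ) < n + V.d) by omega)).trans ?_)
  have : (⟨n + V.d + (es ws q) - (n + V.d), by have := (es ws q).isLt; omega⟩ :
      Fin (Fintype.card (St ws))) = es ws q := Fin.ext (by simp)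
  rw [this, Equiv.symm_apply_apply]

lemma enc_high {a a' : Fin n → β} {b : Fin V.d → β} {g : St ws → β}
    (k : Fin (NN ws V)) (hk : n ≤ (k : ℕ)) :
    enc ws V a b g k = enc ws V a' b g k := by
  simp only [enc]
  split_ifs with h1 h2
  · exact absurd h1 (by omega)
  · rfl
  · rfl

/-- decompose a step equation blockwise -/
lemma enc_step {a da : Fin n → ℤ} {b db : Fin V.d → ℤ} {g dg : St ws → ℤ}
    {a2 : Fin n → ℤ} {b2 : Fin V.d → ℤ} {g2 : St ws → ℤ}
    (ha : ∀ j, a2 j = a j + da j) (hb : ∀ i, b2 i = b i + db i)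
    (hg : ∀ q, g2 q = g q + dg q) :
    ∀ k, enc ws V a2 b2 g2 k = enc ws V a b g k + enc ws V da db dg k := by
  intro k
  simp only [enc]
  split_ifs with h1 h2
  · exact ha _
  · exact hb _
  · exact hg _

/-! ### transitions of the extended VAS -/

/-- integer indicator of a state -/
def ind (q : St ws) : St ws → ℤ := fun q' => if q' = q then 1 else 0

/-- natural-number indicator of a state -/
def indN (q : St ws) : St ws → ℕ := fun q' => if q' = q then 1 else 0

/-- integer unit vector -/
def eC (j : Fin n) : Fin n → ℤ := fun i => if i = j then 1 else 0

noncomputable def tEps (τ : Fin V.d → ℤ) : Fin (NN ws V) → ℤ :=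
  enc ws V 0 τ 0

noncomputable def tLet (τ : Fin V.d → ℤ) (j : Fin n) (p : Fin (ws j).length) :
    Fin (NN ws V) → ℤ :=
  enc ws V 0 τ (fun q => ind ws (some ⟨j, p.succ⟩) q - ind ws (some ⟨j, p.castSucc⟩) q)

noncomputable def tClose (j : Fin n) : Fin (NN ws V) → ℤ :=
  enc ws V (eC j) 0
    (fun q => ind ws (some ⟨j, 0⟩) q - ind ws (some ⟨j, Fin.last _⟩) q)

noncomputable def tNext (j j2 : Fin n) : Fin (NN ws V) → ℤ :=
  enc ws V 0 0 (fun q => ind ws (some ⟨j2, 0⟩) q - ind ws (some ⟨j, 0⟩) q)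

noncomputable def tFin (j : Fin n) : Fin (NN ws V) → ℤ :=
  enc ws V 0 0 (fun q => ind ws none q - ind ws (some ⟨j, 0⟩) q)

open Classical in
/-- the transition set of the extended VAS -/
noncomputable def TT : Finset (Fin (NN ws V) → ℤ) :=
  ((V.T.filter (fun τ => V.lab τ = none)).image (tEps ws V)) ∪
  (((V.T ×ˢ (Finset.univ : Finset (Σ j : Fin n, Fin (ws j).length))).filter
      (fun x => V.lab x.1 = some ((ws x.2.1).get x.2.2))).image
      (fun x => tLet ws V x.1 x.2.1 x.2.2)) ∪
  ((Finset.univ : Finset (Fin n)).image (tClose ws V)) ∪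
  (((Finset.univ : Finset (Fin n × Fin n)).filter (fun x => x.1 < x.2)).image
      (fun x => tNext ws V x.1 x.2)) ∪
  ((Finset.univ : Finset (Fin n)).image (tFin ws V))

lemma mem_TT_eps {τ : Fin V.d → ℤ} (h : τ ∈ V.T) (hl : V.lab τ = none) :
    tEps ws V τ ∈ TT ws V := by
  classical
  unfold TT
  simp only [Finset.mem_union]
  refine Or.inl (Or.inl (Or.inl (Or.inl ?_)))
  apply Finset.mem_image_of_mem
  simp [Finset.mem_filter, h, hl]

lemma mem_TT_let {τ : Fin V.d → ℤ} (h : τ ∈ V.T) (j : Fin n) (p : Fin (ws j).length)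
    (hl : V.lab τ = some ((ws j).get p)) : tLet ws V τ j p ∈ TT ws V := by
  classical
  unfold TT
  simp only [Finset.mem_union]
  refine Or.inl (Or.inl (Or.inl (Or.inr ?_)))
  have : tLet ws V τ j p = (fun x : (Fin V.d → ℤ) × (Σ j : Fin n, Fin (ws j).length)
      => tLet ws V x.1 x.2.1 x.2.2) (τ, ⟨j, p⟩) := rfl
  rw [this]
  apply Finset.mem_image_of_mem
  simp [Finset.mem_filter, h, hl]

lemma mem_TT_close (j : Fin n) : tClose ws V j ∈ TT ws V := by
  classical
  unfold TT
  simp only [Finset.mem_union]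
  exact Or.inl (Or.inl (Or.inr (Finset.mem_image_of_mem _ (Finset.mem_univ j))))

lemma mem_TT_next {j j2 : Fin n} (h : j < j2) : tNext ws V j j2 ∈ TT ws V := by
  classical
  unfold TT
  simp only [Finset.mem_union]
  refine Or.inl (Or.inr ?_)
  have : tNext ws V j j2 = (fun x : Fin n × Fin n => tNext ws V x.1 x.2) (j, j2) := rfl
  rw [this]
  apply Finset.mem_image_of_mem
  simp [Finset.mem_filter, h]

lemma mem_TT_fin (j : Fin n) : tFin ws V j ∈ TT ws V := by
  classical
  unfold TT
  simp only [Finset.mem_union]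
  exact Or.inr (Finset.mem_image_of_mem _ (Finset.mem_univ j))

lemma mem_TT_elim {τ' : Fin (NN ws V) → ℤ} (h : τ' ∈ TT ws V) :
    (∃ τ ∈ V.T, V.lab τ = none ∧ τ' = tEps ws V τ) ∨
    (∃ τ ∈ V.T, ∃ (j : Fin n) (p : Fin (ws j).length),
        V.lab τ = some ((ws j).get p) ∧ τ' = tLet ws V τ j p) ∨
    (∃ j : Fin n, τ' = tClose ws V j) ∨
    (∃ j j2 : Fin n, j < j2 ∧ τ' = tNext ws V j j2) ∨
    (∃ j : Fin n, τ' = tFin ws V j) := by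
  classical
  unfold TT at h
  simp only [Finset.mem_union] at h
  rcases h with ((((h | h) | h) | h) | h)
  · rw [Finset.mem_image] at h
    obtain ⟨τ, hτ, rfl⟩ := h
    rw [Finset.mem_filter] at hτ
    exact Or.inl ⟨τ, hτ.1, hτ.2, rfl⟩
  · rw [Finset.mem_image] at h
    obtain ⟨⟨τ, ⟨j, p⟩⟩, hτ, rfl⟩ := h
    rw [Finset.mem_filter, Finset.mem_product] at hτ
    exact Or.inr (Or.inl ⟨τ, hτ.1.1, j, p, hτ.2, rfl⟩)
  · rw [Finset.mem_image] at h
    obtain ⟨j, _, rfl⟩ := h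
    exact Or.inr (Or.inr (Or.inl ⟨j, rfl⟩))
  · rw [Finset.mem_image] at h
    obtain ⟨⟨j, j2⟩, hj, rfl⟩ := h
    rw [Finset.mem_filter] at hj
    exact Or.inr (Or.inr (Or.inr (Or.inl ⟨j, j2, hj.2, rfl⟩)))
  · rw [Finset.mem_image] at h
    obtain ⟨j, _, rfl⟩ := h
    exact Or.inr (Or.inr (Or.inr (Or.inr ⟨j, rfl⟩)))

/-! ### the invariant -/

def initSt : St ws :=
  if h : n = 0 then none else some ⟨⟨0, Nat.pos_of_ne_zero h⟩, 0⟩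

noncomputable def start : Fin (NN ws V) → ℕ :=
  enc ws V (fun _ => 0) V.s (indN ws (initSt ws))

noncomputable def xf : Fin (NN ws V) → ℕ :=
  enc ws V (fun _ => 0) V.t (indN ws none)

/-- the reader-state part of the invariant -/
def StInv : St ws → List α → (Fin n → ℕ) → Prop
  | none, u, c => u = word ws c
  | some ⟨j, p⟩, u, c => ∃ c' : Fin n → ℕ, (∀ i, j < i → c' i = 0) ∧
      (∀ i, (ws i).length ≠ 0 → (c' i = c i ∧ (j < i → c i = 0))) ∧
      u = word ws c' ++ (ws j).take p

/-- the main invariant of reachable configurations of the extended VAS -/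
def Inv (v : Fin (NN ws V) → ℕ) : Prop :=
  ∃ (q0 : St ws) (u : List α) (ts₀ : List (Fin V.d → ℤ)),
    FireList (↑V.T) V.s ts₀ (fun i => v (cV ws V i)) ∧
    ts₀.filterMap V.lab = u ∧
    (∀ q, v (cS ws V q) = indN ws q0 q) ∧
    StInv ws q0 u (fun j => v (cC ws V j))

lemma stinv_congr {q0 : St ws} {u : List α} {c c2 : Fin n → ℕ}
    (h : ∀ i, (ws i).length ≠ 0 → c2 i = c i) (hst : StInv ws q0 u c) :
    StInv ws q0 u c2 := by
  match q0 with
  | none =>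
    exact hst.trans (word_congr ws fun i hi => (h i hi).symm)
  | some ⟨j, p⟩ =>
    obtain ⟨c', hgt, hc, hu⟩ := hst
    exact ⟨c', hgt, fun i hi => ⟨(hc i hi).1.trans (h i hi).symm,
      fun hji => (h i hi).trans ((hc i hi).2 hji)⟩, hu⟩

lemma st_ne_of_p {j : Fin n} {p p' : Fin ((ws j).length + 1)} (h : p ≠ p') :
    (some ⟨j, p⟩ : St ws) ≠ some ⟨j, p'⟩ := by
  intro he
  exact h (eq_of_heq (Sigma.mk.inj_iff.mp (Option.some.inj he)).2)

lemma st_ne_of_j {j j' : Fin n} (h : j ≠ j') (p : Fin ((ws j).length + 1))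
    (p' : Fin ((ws j').length + 1)) :
    (some ⟨j, p⟩ : St ws) ≠ some ⟨j', p'⟩ := by
  intro he
  exact h (Sigma.mk.inj_iff.mp (Option.some.inj he)).1

lemma onehot_step {v v2 : Fin (NN ws V) → ℕ} {q0 qs qt : St ws} (hne : qs ≠ qt)
    (hv : ∀ q, v (cS ws V q) = indN ws q0 q)
    (hstep : ∀ q, (v2 (cS ws V q) : ℤ) =
      v (cS ws V q) + (ind ws qt q - ind ws qs q)) :
    q0 = qs ∧ ∀ q, v2 (cS ws V q) = indN ws qt q := by
  have hq : q0 = qs := by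
    by_contra hq
    have h1 := hstep qs
    rw [hv qs] at h1
    simp only [indN, ind] at h1
    rw [if_neg (fun h : qs = q0 => hq h.symm), if_neg hne] at h1
    simp only [if_true] at h1
    omega
  subst hq
  refine ⟨rfl, fun q => ?_⟩
  have h2 := hstep q
  rw [hv q] at h2
  simp only [indN, ind] at h2 ⊢
  split_ifs at h2 ⊢ <;> omega

lemma inv_step {v v2 : Fin (NN ws V) → ℕ} {τ' : Fin (NN ws V) → ℤ}
    (hτ : τ' ∈ TT ws V) (hstep : ∀ k, (v2 k : ℤ) = v k + τ' k)
    (hinv : Inv ws V v) : Inv ws V v2 := by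
  obtain ⟨q0, u, ts₀, hfire, hlab, hhot, hst⟩ := hinv
  rcases mem_TT_elim ws V hτ with ⟨τ, hm, hl, rfl⟩ | ⟨τ, hm, j, p, hl, rfl⟩ |
    ⟨j, rfl⟩ | ⟨j, j2, hj, rfl⟩ | ⟨j, rfl⟩
  · -- ε-transition of V
    have hC : ∀ i, v2 (cC ws V i) = v (cC ws V i) := by
      intro i
      have h := hstep (cC ws V i)
      simp only [tEps, enc_cC, Pi.zero_apply, add_zero] at h
      exact_mod_cast h
    have hS : ∀ q, v2 (cS ws V q) = v (cS ws V q) := by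
      intro q
      have h := hstep (cS ws V q)
      simp only [tEps, enc_cS, Pi.zero_apply, add_zero] at h
      exact_mod_cast h
    have hV : ∀ i, (v2 (cV ws V i) : ℤ) = v (cV ws V i) + τ i := by
      intro i
      have h := hstep (cV ws V i)
      simpa only [tEps, enc_cV] using h
    refine ⟨q0, u, ts₀ ++ [τ], ?_, ?_, fun q => (hS q).trans (hhot q), ?_⟩
    · exact fireList_append hfire ⟨Finset.mem_coe.mpr hm, _, hV, rfl⟩
    · rw [List.filterMap_append, hlab]
      simp [hl]
    · have : (fun i => v2 (cC ws V i)) = fun i => v (cC ws V i) := funext hC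
      rw [this]
      exact hst
  · -- labeled transition of V, reading letter `p` of block `j`
    have hC : ∀ i, v2 (cC ws V i) = v (cC ws V i) := by
      intro i
      have h := hstep (cC ws V i)
      simp only [tLet, enc_cC, Pi.zero_apply, add_zero] at h
      exact_mod_cast h
    have hV : ∀ i, (v2 (cV ws V i) : ℤ) = v (cV ws V i) + τ i := by
      intro i
      have h := hstep (cV ws V i)
      simpa only [tLet, enc_cV] using h
    have hS : ∀ q, (v2 (cS ws V q) : ℤ) = v (cS ws V q) +
        (ind ws (some ⟨j, p.succ⟩) q - ind ws (some ⟨j, p.castSucc⟩) q) := by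
      intro q
      have h := hstep (cS ws V q)
      simpa only [tLet, enc_cS] using h
    obtain ⟨hq0, hhot2⟩ := onehot_step ws V
      (st_ne_of_p ws (@Fin.castSucc_lt_succ _ p).ne) hhot hS
    subst hq0
    obtain ⟨c', hgt, hc, hu⟩ := hst
    refine ⟨some ⟨j, p.succ⟩, u ++ [(ws j).get p], ts₀ ++ [τ], ?_, ?_, hhot2, ?_⟩
    · exact fireList_append hfire ⟨Finset.mem_coe.mpr hm, _, hV, rfl⟩
    · rw [List.filterMap_append, hlab]
      simp [hl]
    · refine ⟨c', hgt, ?_, ?_⟩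
      · intro i hi
        show c' i = v2 (cC ws V i) ∧ (j < i → v2 (cC ws V i) = 0)
        rw [hC i]
        exact hc i hi
      · have hpl := p.isLt
        rw [hu, List.append_assoc]
        congr 1
        rw [Fin.val_succ, Fin.coe_castSucc, List.take_succ]
        congr 1
        rw [List.getElem?_eq_getElem hpl]
        rfl
  · -- closing a copy of block `j`
    by_cases h0 : (0 : Fin ((ws j).length + 1)) = Fin.last _
    · -- the word `ws j` is empty : pure counter increment
      have hlen : (ws j).length = 0 := by
        have := congrArg Fin.val h0
        simpa using this.symm
      have hS : ∀ q, v2 (cS ws V q) = v (cS ws V q) := by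
        intro q
        have h := hstep (cS ws V q)
        simp only [tClose, enc_cS] at h
        rw [← h0, sub_self, add_zero] at h
        exact_mod_cast h
      have hV : ∀ i, v2 (cV ws V i) = v (cV ws V i) := by
        intro i
        have h := hstep (cV ws V i)
        simp only [tClose, enc_cV, Pi.zero_apply, add_zero] at h
        exact_mod_cast h
      have hC : ∀ i, (ws i).length ≠ 0 → v2 (cC ws V i) = v (cC ws V i) := by
        intro i hi
        have h := hstep (cC ws V i)
        simp only [tClose, enc_cC, eC] at h
        rw [if_neg (fun he : i = j => hi (he ▸ hlen)), add_zero] at h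
        exact_mod_cast h
      refine ⟨q0, u, ts₀, ?_, hlab, fun q => (hS q).trans (hhot q), ?_⟩
      · have : (fun i => v2 (cV ws V i)) = fun i => v (cV ws V i) := funext hV
        rw [this]
        exact hfire
      · exact stinv_congr ws hC hst
    · -- the word `ws j` is nonempty
      have hlen : (ws j).length ≠ 0 := by
        intro hl
        exact h0 (Fin.ext (by simp [hl]))
      have hV : ∀ i, v2 (cV ws V i) = v (cV ws V i) := by
        intro i
        have h := hstep (cV ws V i)
        simp only [tClose, enc_cV, Pi.zero_apply, add_zero] at h
        exact_mod_cast h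
      have hC : ∀ i, v2 (cC ws V i) = v (cC ws V i) + if i = j then 1 else 0 := by
        intro i
        have h := hstep (cC ws V i)
        simp only [tClose, enc_cC, eC] at h
        split_ifs at h ⊢ <;> omega
      have hS : ∀ q, (v2 (cS ws V q) : ℤ) = v (cS ws V q) +
          (ind ws (some ⟨j, 0⟩) q - ind ws (some ⟨j, Fin.last _⟩) q) := by
        intro q
        have h := hstep (cS ws V q)
        simpa only [tClose, enc_cS] using h
      obtain ⟨hq0, hhot2⟩ := onehot_step ws V
        (st_ne_of_p ws (fun he => h0 he.symm)) hhot hS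
      subst hq0
      obtain ⟨c', hgt, hc, hu⟩ := hst
      refine ⟨some ⟨j, 0⟩, u, ts₀, ?_, hlab, hhot2, ?_⟩
      · have : (fun i => v2 (cV ws V i)) = fun i => v (cV ws V i) := funext hV
        rw [this]
        exact hfire
      · refine ⟨fun i => c' i + if i = j then 1 else 0, ?_, ?_, ?_⟩
        · intro i hi
          show c' i + (if i = j then 1 else 0) = 0
          rw [if_neg (Fin.ne_of_gt hi), hgt i hi]
        · intro i hi
          constructor
          · show c' i + (if i = j then 1 else 0) = v2 (cC ws V i)
            have h1 : c' i = v (cC ws V i) := (hc i hi).1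
            rw [hC i, h1]
          · intro hji
            show v2 (cC ws V i) = 0
            rw [hC i, if_neg (Fin.ne_of_gt hji), Nat.add_zero]
            exact (hc i hi).2 hji
        · rw [word_split ws c' j hgt]
          simp only [Fin.val_zero, List.take_zero, List.append_nil]
          rw [hu, Fin.val_last, List.take_length]
  · -- moving from block `j` to block `j2`
    have hC : ∀ i, v2 (cC ws V i) = v (cC ws V i) := by
      intro i
      have h := hstep (cC ws V i)
      simp only [tNext, enc_cC, Pi.zero_apply, add_zero] at h
      exact_mod_cast h
    have hV : ∀ i, v2 (cV ws V i) = v (cV ws V i) := by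
      intro i
      have h := hstep (cV ws V i)
      simp only [tNext, enc_cV, Pi.zero_apply, add_zero] at h
      exact_mod_cast h
    have hS : ∀ q, (v2 (cS ws V q) : ℤ) = v (cS ws V q) +
        (ind ws (some ⟨j2, 0⟩) q - ind ws (some ⟨j, 0⟩) q) := by
      intro q
      have h := hstep (cS ws V q)
      simpa only [tNext, enc_cS] using h
    obtain ⟨hq0, hhot2⟩ := onehot_step ws V
      (st_ne_of_j ws (Fin.ne_of_lt hj) _ _) hhot hS
    subst hq0
    obtain ⟨c', hgt, hc, hu⟩ := hst
    refine ⟨some ⟨j2, 0⟩, u, ts₀, ?_, hlab, hhot2, ?_⟩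
    · have : (fun i => v2 (cV ws V i)) = fun i => v (cV ws V i) := funext hV
      rw [this]
      exact hfire
    · have hcnt : (fun i => v2 (cC ws V i)) = fun i => v (cC ws V i) := funext hC
      rw [hcnt]
      exact ⟨c', fun i hi => hgt i (hj.trans hi), fun i hi =>
        ⟨(hc i hi).1, fun hji => (hc i hi).2 (hj.trans hji)⟩, hu⟩
  · -- moving from block `j` to the final state
    have hC : ∀ i, v2 (cC ws V i) = v (cC ws V i) := by
      intro i
      have h := hstep (cC ws V i)
      simp only [tFin, enc_cC, Pi.zero_apply, add_zero] at h
      exact_mod_cast h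
    have hV : ∀ i, v2 (cV ws V i) = v (cV ws V i) := by
      intro i
      have h := hstep (cV ws V i)
      simp only [tFin, enc_cV, Pi.zero_apply, add_zero] at h
      exact_mod_cast h
    have hS : ∀ q, (v2 (cS ws V q) : ℤ) = v (cS ws V q) +
        (ind ws none q - ind ws (some ⟨j, 0⟩) q) := by
      intro q
      have h := hstep (cS ws V q)
      simpa only [tFin, enc_cS] using h
    obtain ⟨hq0, hhot2⟩ := onehot_step ws V (Option.some_ne_none _) hhot hS
    subst hq0
    obtain ⟨c', hgt, hc, hu⟩ := hst
    refine ⟨none, u, ts₀, ?_, hlab, hhot2, ?_⟩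
    · have : (fun i => v2 (cV ws V i)) = fun i => v (cV ws V i) := funext hV
      rw [this]
      exact hfire
    · show u = word ws fun i => v2 (cC ws V i)
      have hcnt : (fun i => v2 (cC ws V i)) = fun i => v (cC ws V i) := funext hC
      rw [hcnt, hu]
      simp only [Fin.val_zero, List.take_zero, List.append_nil]
      exact word_congr ws fun i hi => (hc i hi).1

lemma inv_reach {v v2 : Fin (NN ws V) → ℕ} {ts : List (Fin (NN ws V) → ℤ)}
    (hfire : FireList (↑(TT ws V)) v ts v2) (hinv : Inv ws V v) : Inv ws V v2 := by
  induction ts generalizing v with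
  | nil => cases hfire; exact hinv
  | cons τ' ts ih =>
    obtain ⟨hτ, u, hu, hrest⟩ := hfire
    exact ih hrest (inv_step ws V (Finset.mem_coe.mp hτ) hu hinv)

lemma inv_start : Inv ws V (start ws V) := by
  refine ⟨initSt ws, [], [], ?_, rfl, ?_, ?_⟩
  · show V.s = _
    funext i
    rw [start, enc_cV]
  · intro q
    rw [start, enc_cS]
  · have hcnt : (fun j => start ws V (cC ws V j)) = fun _ => 0 := by
      funext j
      rw [start, enc_cC]
    rw [hcnt]
    unfold initSt
    split_ifs with hn
    · show ([] : List α) = word ws fun _ => 0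
      rw [word_zero]
    · refine ⟨fun _ => 0, fun _ _ => rfl, fun i _ => ⟨rfl, fun _ => rfl⟩, ?_⟩
      rw [word_zero]
      simp

/-! ### completeness : simulating a run of `V` together with a reader run -/

lemma enc_cast (a : Fin n → ℕ) (b : Fin V.d → ℕ) (g : St ws → ℕ) (k : Fin (NN ws V)) :
    ((enc ws V a b g k : ℕ) : ℤ) =
      enc ws V (fun j => (a j : ℤ)) (fun i => (b i : ℤ)) (fun q => (g q : ℤ)) k := by
  simp only [enc]
  split_ifs <;> rfl

lemma fire_cons {a a2 : Fin n → ℕ} {b b2 : Fin V.d → ℕ} {g g2 : St ws → ℕ}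
    {da : Fin n → ℤ} {db : Fin V.d → ℤ} {dg : St ws → ℤ}
    (hmem : enc ws V da db dg ∈ TT ws V)
    (ha : ∀ j, (a2 j : ℤ) = a j + da j) (hb : ∀ i, (b2 i : ℤ) = b i + db i)
    (hg : ∀ q, (g2 q : ℤ) = g q + dg q) {ts : List (Fin (NN ws V) → ℤ)}
    {v' : Fin (NN ws V) → ℕ} (hcont : FireList (↑(TT ws V)) (enc ws V a2 b2 g2) ts v') :
    FireList (↑(TT ws V)) (enc ws V a b g) (enc ws V da db dg :: ts) v' :=
  ⟨Finset.mem_coe.mpr hmem, enc ws V a2 b2 g2, fun k => by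
    rw [enc_cast, enc_cast]
    exact enc_step ws V ha hb hg k, hcont⟩

/-- runs of the "reader" part : from state `q` with counters `c`, reading the
word `u`, one can reach state `q'` with counters `c'`. -/
inductive Reads : St ws → (Fin n → ℕ) → List α → St ws → (Fin n → ℕ) → Prop
  | refl (q : St ws) (c : Fin n → ℕ) : Reads q c [] q c
  | letter {j : Fin n} (p : Fin (ws j).length) {c : Fin n → ℕ} {u : List α}
      {q' : St ws} {c' : Fin n → ℕ} :
      Reads (some ⟨j, p.succ⟩) c u q' c' →
      Reads (some ⟨j, p.castSucc⟩) c ((ws j).get p :: u) q' c'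
  | close {j : Fin n} {c : Fin n → ℕ} {u : List α} {q' : St ws} {c' : Fin n → ℕ} :
      Reads (some ⟨j, 0⟩) (fun i => c i + if i = j then 1 else 0) u q' c' →
      Reads (some ⟨j, Fin.last _⟩) c u q' c'
  | next {j j2 : Fin n} (h : j < j2) {c : Fin n → ℕ} {u : List α} {q' : St ws}
      {c' : Fin n → ℕ} :
      Reads (some ⟨j2, 0⟩) c u q' c' → Reads (some ⟨j, 0⟩) c u q' c'
  | fin {j : Fin n} {c : Fin n → ℕ} {u : List α} {q' : St ws} {c' : Fin n → ℕ} :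
      Reads none c u q' c' → Reads (some ⟨j, 0⟩) c u q' c'

lemma reads_trans {q c u q1 c1 u2 q2 c2} (h1 : Reads ws q c u q1 c1)
    (h2 : Reads ws q1 c1 u2 q2 c2) : Reads ws q c (u ++ u2) q2 c2 := by
  induction h1 with
  | refl => exact h2
  | letter p _ ih => exact Reads.letter p (ih h2)
  | close _ ih => exact Reads.close (ih h2)
  | next hlt _ ih => exact Reads.next hlt (ih h2)
  | fin _ ih => exact Reads.fin (ih h2)

lemma sim_eps {v v' : Fin V.d → ℕ} {ts₀ : List (Fin V.d → ℤ)}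
    (hfire : FireList (↑V.T) v ts₀ v') (hlab : ts₀.filterMap V.lab = [])
    (c : Fin n → ℕ) (q : St ws) :
    ∃ ts', FireList (↑(TT ws V)) (enc ws V c v (indN ws q)) ts'
      (enc ws V c v' (indN ws q)) := by
  induction ts₀ generalizing v with
  | nil => cases hfire; exact ⟨[], rfl⟩
  | cons τ rest ih =>
    obtain ⟨hτ, w, hw, hrest⟩ := hfire
    cases hl : V.lab τ with
    | some a =>
      simp only [List.filterMap_cons, hl] at hlab
      exact absurd hlab (List.cons_ne_nil _ _)
    | none =>
      simp only [List.filterMap_cons, hl] at hlab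
      obtain ⟨ts', hts'⟩ := ih hrest hlab
      exact ⟨tEps ws V τ :: ts', fire_cons ws V (mem_TT_eps ws V (Finset.mem_coe.mp hτ) hl)
        (fun j => by simp) hw (fun q => by simp) hts'⟩

lemma run_split {v v' : Fin V.d → ℕ} {ts₀ : List (Fin V.d → ℤ)} {a : α} {u' : List α}
    (hfire : FireList (↑V.T) v ts₀ v') (hlab : ts₀.filterMap V.lab = a :: u') :
    ∃ (ts1 : List (Fin V.d → ℤ)) (τ : Fin V.d → ℤ) (ts2 : List (Fin V.d → ℤ))
      (v1 v2 : Fin V.d → ℕ),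
      FireList (↑V.T) v ts1 v1 ∧ ts1.filterMap V.lab = [] ∧ τ ∈ V.T ∧
      V.lab τ = some a ∧ (∀ i, (v2 i : ℤ) = v1 i + τ i) ∧
      FireList (↑V.T) v2 ts2 v' ∧ ts2.filterMap V.lab = u' := by
  induction ts₀ generalizing v with
  | nil => simp at hlab
  | cons τ rest ih =>
    obtain ⟨hτ, w, hw, hrest⟩ := hfire
    cases hl : V.lab τ with
    | some b =>
      simp only [List.filterMap_cons, hl] at hlab
      obtain ⟨rfl, hlab'⟩ := List.cons.inj hlab
      exact ⟨[], τ, rest, v, w, rfl, rfl, Finset.mem_coe.mp hτ, hl, hw, hrest, hlab'⟩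
    | none =>
      simp only [List.filterMap_cons, hl] at hlab
      obtain ⟨ts1, τ', ts2, v1, v2, hf1, hl1, hm, hlτ, hstepτ, hf2, hl2⟩ := ih hrest hlab
      refine ⟨τ :: ts1, τ', ts2, v1, v2, ⟨hτ, w, hw, hf1⟩, ?_, hm, hlτ, hstepτ, hf2, hl2⟩
      simp only [List.filterMap_cons, hl, hl1]

lemma ind_step {qs qt : St ws} :
    ∀ q, ((indN ws qt q : ℕ) : ℤ) = indN ws qs q + (ind ws qt q - ind ws qs q) := by
  intro q
  simp only [indN, ind]
  split_ifs <;> omega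

lemma sim {q : St ws} {c : Fin n → ℕ} {u : List α} {q1 : St ws} {c1 : Fin n → ℕ}
    (hr : Reads ws q c u q1 c1) :
    ∀ {v v' : Fin V.d → ℕ} {ts₀ : List (Fin V.d → ℤ)},
      FireList (↑V.T) v ts₀ v' → ts₀.filterMap V.lab = u →
      ∃ ts', FireList (↑(TT ws V)) (enc ws V c v (indN ws q)) ts'
        (enc ws V c1 v' (indN ws q1)) := by
  induction hr with
  | refl q c =>
    intro v v' ts₀ hf hl
    exact sim_eps ws V hf hl c q
  | @letter j p c u q' c' hrest ih =>
    intro v v' ts₀ hf hl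
    obtain ⟨ts1, τ, ts2, v1, v2, hf1, hl1, hm, hlτ, hstepτ, hf2, hl2⟩ := run_split V hf hl
    obtain ⟨tsA, hA⟩ := sim_eps ws V hf1 hl1 c (some ⟨j, p.castSucc⟩)
    obtain ⟨tsB, hB⟩ := ih hf2 hl2
    exact ⟨tsA ++ (tLet ws V τ j p :: tsB), fireList_append hA
      (fire_cons ws V (mem_TT_let ws V hm j p hlτ) (fun i => by simp) hstepτ
        (ind_step ws) hB)⟩
  | @close j c u q' c' hrest ih =>
    intro v v' ts₀ hf hl
    obtain ⟨tsB, hB⟩ := ih hf hl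
    refine ⟨tClose ws V j :: tsB, fire_cons ws V (mem_TT_close ws V j) ?_
      (fun i => by simp) (ind_step ws) hB⟩
    intro i
    simp only [eC]
    split_ifs <;> push_cast <;> omega
  | @next j j2 hlt c u q' c' hrest ih =>
    intro v v' ts₀ hf hl
    obtain ⟨tsB, hB⟩ := ih hf hl
    exact ⟨tNext ws V j j2 :: tsB, fire_cons ws V (mem_TT_next ws V hlt)
      (fun i => by simp) (fun i => by simp) (ind_step ws) hB⟩
  | @fin j c u q' c' hrest ih =>
    intro v v' ts₀ hf hl
    obtain ⟨tsB, hB⟩ := ih hf hl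
    exact ⟨tFin ws V j :: tsB, fire_cons ws V (mem_TT_fin ws V j)
      (fun i => by simp) (fun i => by simp) (ind_step ws) hB⟩

/-! ### the reader can read any word of the form `w1^{x1} ⋯ wn^{xn}` -/

lemma reads_drop (j : Fin n) (c : Fin n → ℕ) :
    ∀ (k : ℕ) (p : Fin ((ws j).length + 1)), (ws j).length - (p : ℕ) = k →
      Reads ws (some ⟨j, p⟩) c ((ws j).drop p) (some ⟨j, Fin.last _⟩) c := by
  intro k
  induction k with
  | zero =>
    intro p hp
    have hp' : (p : ℕ) = (ws j).length := by have := p.isLt; omega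
    have : p = Fin.last _ := Fin.ext (by simpa using hp')
    subst this
    rw [Fin.val_last, List.drop_length]
    exact Reads.refl _ _
  | succ k ihk =>
    intro p hp
    have hlt : (p : ℕ) < (ws j).length := by omega
    set p' : Fin (ws j).length := ⟨p, hlt⟩ with hp'
    have hps : p = p'.castSucc := Fin.ext rfl
    have key : Reads ws (some ⟨j, p'.castSucc⟩) c
        ((ws j).get p' :: (ws j).drop ((p' : ℕ) + 1)) (some ⟨j, Fin.last _⟩) c :=
      Reads.letter p' (ihk p'.succ (by show (ws j).length - ((p : ℕ) + 1) = k; omega))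
    have hd : (ws j).drop (p : ℕ) = (ws j).get p' :: (ws j).drop ((p' : ℕ) + 1) := by
      rw [List.drop_eq_getElem_cons hlt]
      rfl
    rw [hd, hps]
    exact key

lemma reads_wpow (j : Fin n) (k : ℕ) (c : Fin n → ℕ) :
    Reads ws (some ⟨j, 0⟩) c (wpow (ws j) k) (some ⟨j, 0⟩)
      (fun i => c i + if i = j then k else 0) := by
  induction k generalizing c with
  | zero =>
    have h : (fun i => c i + if i = j then 0 else 0) = c := by
      funext i; split_ifs <;> omega
    rw [wpow_zero, h]
    exact Reads.refl _ _
  | succ k ihk =>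
    rw [wpow_succ]
    have hd := reads_drop ws j c ((ws j).length - (0 : Fin ((ws j).length + 1)))
      (0 : Fin ((ws j).length + 1)) rfl
    simp only [Fin.val_zero, List.drop_zero] at hd
    have h1 : Reads ws (some ⟨j, 0⟩) c (ws j ++ []) (some ⟨j, 0⟩)
        (fun i => c i + if i = j then 1 else 0) :=
      reads_trans ws hd (Reads.close (Reads.refl _ _))
    rw [List.append_nil] at h1
    have h2 := ihk (fun i => c i + if i = j then 1 else 0)
    have h3 := reads_trans ws h1 h2
    have h4 : (fun i => (c i + if i = j then 1 else 0) + if i = j then k else 0)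
        = fun i => c i + if i = j then k + 1 else 0 := by
      funext i; split_ifs <;> omega
    rwa [h4] at h3

lemma reads_blocks (x : Fin n → ℕ) :
    ∀ (k : ℕ) (j : Fin n), n - (j : ℕ) = k → ∀ c : Fin n → ℕ,
      Reads ws (some ⟨j, 0⟩) c
        (((List.ofFn fun i => wpow (ws i) (x i)).drop j).flatten) none
        (fun i => if (j : ℕ) ≤ (i : ℕ) then c i + x i else c i) := by
  intro k
  induction k with
  | zero => intro j hj; exact absurd hj (by have := j.isLt; omega)
  | succ k ihk =>
    intro j hj c
    have hjn := j.isLt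
    have hdrop : (List.ofFn fun i => wpow (ws i) (x i)).drop j
        = wpow (ws j) (x j) :: (List.ofFn fun i => wpow (ws i) (x i)).drop ((j : ℕ) + 1) := by
      rw [List.drop_eq_getElem_cons (by simpa using hjn)]
      congr 1
      simp
    rw [hdrop, List.flatten_cons]
    have h1 := reads_wpow ws j (x j) c
    by_cases hlast : (j : ℕ) + 1 < n
    · set j2 : Fin n := ⟨(j : ℕ) + 1, hlast⟩ with hj2
      have h2 := ihk j2 (by simp [hj2]; omega) (fun i => c i + if i = j then x j else 0)
      have h3 := reads_trans ws h1 (Reads.next (show j < j2 by simp [hj2, Fin.lt_def]) h2)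
      have h4 : (fun (i : Fin n) => if (j2 : ℕ) ≤ (i : ℕ) then
            (c i + if i = j then x j else 0) + x i else (c i + if i = j then x j else 0))
          = fun (i : Fin n) => if (j : ℕ) ≤ (i : ℕ) then c i + x i else c i := by
        funext i
        have hij : i = j ↔ (i : ℕ) = (j : ℕ) := Fin.ext_iff
        by_cases hij2 : i = j <;> rw [hj2] at * <;> split_ifs <;> simp_all <;> omega
      rwa [h4] at h3
    · have hdone : (List.ofFn fun i => wpow (ws i) (x i)).drop ((j : ℕ) + 1) = [] :=
        List.drop_eq_nil_of_le (by simpa using (by omega : n ≤ (j : ℕ) + 1))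
      rw [hdone, List.flatten_nil]
      have h3 := reads_trans ws h1 (Reads.fin (Reads.refl _ _))
      have h4 : (fun (i : Fin n) => c i + if i = j then x j else 0)
          = fun (i : Fin n) => if (j : ℕ) ≤ (i : ℕ) then c i + x i else c i := by
        funext i
        have hin := i.isLt
        have hij : i = j ↔ (i : ℕ) = (j : ℕ) := Fin.ext_iff
        by_cases hij2 : i = j <;> split_ifs <;> simp_all <;> omega
      rwa [h4] at h3

lemma reads_word (x : Fin n → ℕ) :
    Reads ws (initSt ws) (fun _ => 0) (word ws x) none x := by
  by_cases hn : n = 0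
  · subst hn
    have h1 : initSt ws = none := by unfold initSt; rw [dif_pos rfl]
    have h2 : word ws x = [] := by
      unfold word
      rw [List.ofFn_zero, List.flatten_nil]
    have h3 : x = fun _ => 0 := funext fun i => i.elim0
    rw [h1, h2, h3]
    exact Reads.refl _ _
  · have hpos : 0 < n := Nat.pos_of_ne_zero hn
    have h1 : initSt ws = some ⟨⟨0, hpos⟩, 0⟩ := by unfold initSt; rw [dif_neg hn]
    have h2 := reads_blocks ws x n ⟨0, hpos⟩ (by simp) (fun _ => 0)
    simp only [List.drop_zero] at h2
    have h3 : (fun (i : Fin n) => if ((⟨0, hpos⟩ : Fin n) : ℕ) ≤ (i : ℕ)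
        then (fun _ => 0) i + x i else (fun (_ : Fin n) => (0 : ℕ)) i) = x := by
      funext i
      simp
    rw [h1]
    rw [h3] at h2
    exact h2

/-- the master lemma : for any labeled VAS `V` and words `ws`, the set of
exponent tuples whose associated word lies in the language of `V` is a section
of a VAS reachability set. -/
theorem master : IsVASReachSection {x : Fin n → ℕ | word ws x ∈ V.lang} := by
  classical
  refine ⟨NN ws V, TT ws V, start ws V,
    Finset.univ.filter (fun k => n ≤ (k : ℕ)), xf ws V, fun j => cC ws V j,
    ?_, ?_, ?_, ?_⟩
  · intro a b hab
    show cC ws V a < cC ws V b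
    rw [Fin.lt_def]
    exact hab
  · intro j
    simp only [Finset.mem_filter, Finset.mem_univ, true_and, cC, not_le]
    exact j.isLt
  · intro i hi
    simp only [Finset.mem_filter, Finset.mem_univ, true_and, not_le] at hi
    exact ⟨⟨(i : ℕ), hi⟩, Fin.ext rfl⟩
  · ext x
    simp only [Set.mem_setOf_eq]
    constructor
    · intro hx
      obtain ⟨ts₀, hf, hl⟩ := hx
      obtain ⟨ts', hts'⟩ := sim ws V (reads_word ws x) hf hl
      refine ⟨enc ws V x V.t (indN ws none), ⟨ts', hts'⟩, ?_, ?_⟩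
      · intro i hi
        simp only [Finset.mem_filter, Finset.mem_univ, true_and] at hi
        exact enc_high ws V i hi
      · intro j
        rw [enc_cC]
    · rintro ⟨v, ⟨ts, hts⟩, hI, hE⟩
      obtain ⟨q0, u, ts₀, hfire, hlab, hhot, hst⟩ :=
        inv_reach ws V hts (inv_start ws V)
      have hmid : ∀ i, v (cV ws V i) = V.t i := by
        intro i
        have h := hI (cV ws V i) (Finset.mem_filter.mpr ⟨Finset.mem_univ _, by
          simp [cV]⟩)
        rw [h, xf, enc_cV]
      have hq0 : q0 = none := by
        have h1 := hI (cS ws V none) (Finset.mem_filter.mpr ⟨Finset.mem_univ _, by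
          simp only [cS]
          omega⟩)
        rw [xf, enc_cS] at h1
        have h2 := hhot none
        rw [h1] at h2
        simp only [indN] at h2
        by_contra hne
        rw [if_neg (fun h : (none : St ws) = q0 => hne h.symm)] at h2
        simp [indN] at h2
      subst hq0
      have hcnt : (fun j => v (cC ws V j)) = x := funext hE
      rw [hcnt] at hst
      refine ⟨ts₀, ?_, ?_⟩
      · have : (fun i => v (cV ws V i)) = V.t := funext hmid
        rw [← this]
        exact hfire
      · rw [hlab]
        exact hst

end BVLS

/-- If `L ⊆ w1*⋯wn*` is a VAS language, then
`U = {(x1,…,xn) : w1^{x1}⋯wn^{xn} ∈ L}` is a section of the reachability set of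
some vector addition system. -/
theorem bounded_vas_language_section {α : Type} [Fintype α] {n : ℕ}
    (ws : Fin n → List α) (L : Set (List α)) (hL : IsVASLang L)
    (hb : L ⊆ LangConcFn fun i => LangStar {ws i}) :
    IsVASReachSection
      {x : Fin n → ℕ | (List.ofFn fun i => wpow (ws i) (x i)).flatten ∈ L} := by
  obtain ⟨V, rfl⟩ := hL
  exact BVLS.master ws V
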